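/- arXiv:1510.05309 — 2 statements merged into one kernel-verified Lean document; each statement's English description precedes it below -/
import Mathlib

section
/- Let $x$ be an isolated point of the infinite path space $E^\infty$ and $n$ a normalizer of $D(E)$ in $A_R(G_E)$ over an integral domain $R$. If $p_x n p_x \neq 0$, then $p_x n p_x = r \mathbf{1}_{\{(x,k,x)\}}$ for some $k \in \mathbb{Z}$ and $r \in R$, where $p_x = \mathbf{1}_{\{x\}}$. -/
open scoped Classical BigOperators

namespace LPA

structure DirGraph where
  V : Type
  E : Type
  r : E → V
  s : E → V

structure InfPath (G : DirGraph) where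
  edges : ℕ → G.E
  compat : ∀ i, G.s (edges i) = G.r (edges (i + 1))

structure FinPath (G : DirGraph) where
  len : ℕ
  vtx : G.V
  edges : ℕ → G.E
  compat : ∀ i, i + 1 < len → G.s (edges i) = G.r (edges (i + 1))
  vtx_eq : 0 < len → vtx = G.r (edges 0)

variable {G : DirGraph}

/-- The source vertex of a finite path (its `vtx` if it has length `0`). -/
def FinPath.src (μ : FinPath G) : G.V :=
  if μ.len = 0 then μ.vtx else G.s (μ.edges (μ.len - 1))

/-- The range vertex of an infinite path. -/
def InfPath.rng (x : InfPath G) : G.V := G.r (x.edges 0)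

/-- `x ∼ₖ y`: shift equivalence with lag `k`. -/
def ShiftEquiv (x : InfPath G) (k : ℤ) (y : InfPath G) : Prop :=
  ∃ a b N : ℕ, (a : ℤ) - (b : ℤ) = k ∧ ∀ i, N ≤ i → x.edges (i + a) = y.edges (i + b)

def RowFinite (G : DirGraph) : Prop := ∀ v : G.V, {e : G.E | G.r e = v}.Finite

def NoSources (G : DirGraph) : Prop := ∀ v : G.V, ∃ e : G.E, G.r e = v

/-- `x = μ z`: the infinite path `x` is the concatenation of the finite path `μ`
with the infinite path `z`. -/
def IsConcat (μ : FinPath G) (z x : InfPath G) : Prop :=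
  z.rng = μ.src ∧ ∀ i, x.edges i = if i < μ.len then μ.edges i else z.edges (i - μ.len)

/-- `ρ = μ β`: concatenation of finite paths. -/
def IsAppendF (μ β ρ : FinPath G) : Prop :=
  ρ.len = μ.len + β.len ∧ (∀ i < μ.len, ρ.edges i = μ.edges i) ∧
    (∀ i < β.len, ρ.edges (μ.len + i) = β.edges i) ∧
    ρ.vtx = if μ.len = 0 then β.vtx else μ.vtx

/-- Triples `(x, k, y)`: the ambient type of the graph groupoid. -/
abbrev GTrip (G : DirGraph) := InfPath G × ℤ × InfPath G

def gmul (g h : GTrip G) : GTrip G := (g.1, g.2.1 + h.2.1, h.2.2)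
def ginv (g : GTrip G) : GTrip G := (g.2.2, -g.2.1, g.1)
def unit (x : InfPath G) : GTrip G := (x, 0, x)

def GraphGroupoid (G : DirGraph) : Set (GTrip G) :=
  {g | ShiftEquiv g.1 g.2.1 g.2.2}

/-- `BC` for subsets of the groupoid. -/
def setMul (B C : Set (GTrip G)) : Set (GTrip G) :=
  {g | ∃ γ ∈ B, ∃ η ∈ C, γ.2.2 = η.1 ∧ g = gmul γ η}

def setInv (B : Set (GTrip G)) : Set (GTrip G) := ginv '' B

/-- The cylinder set `Z(μ)` of infinite paths extending `μ`. -/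
def Zset (μ : FinPath G) : Set (InfPath G) :=
  {x | (∀ i < μ.len, x.edges i = μ.edges i) ∧ x.rng = μ.vtx}

/-- The basic compact open bisection `Z(μ,ν) = {(μz, |μ|-|ν|, νz)}`. -/
def ZZ (μ ν : FinPath G) : Set (GTrip G) :=
  {g | ∃ z : InfPath G, IsConcat μ z g.1 ∧ IsConcat ν z g.2.2 ∧
    g.2.1 = (μ.len : ℤ) - (ν.len : ℤ)}

instance : TopologicalSpace (InfPath G) :=
  TopologicalSpace.generateFrom {S | ∃ μ : FinPath G, S = Zset μ}

def unitSet (S : Set (InfPath G)) : Set (GTrip G) := {g | ∃ x ∈ S, g = unit x}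

variable (R : Type) [CommRing R]

/-- The diagonal `D(E)` of the Steinberg algebra. -/
noncomputable def Diag (G : DirGraph) : Submodule R (GTrip G → R) :=
  Submodule.span R {f | ∃ μ : FinPath G, f = Set.indicator (unitSet (Zset μ)) 1}

/-- The Steinberg algebra `A_R(G_E)` as a set of functions on the groupoid. -/
noncomputable def Steinberg (G : DirGraph) : Submodule R (GTrip G → R) :=
  Submodule.span R
    {f | ∃ μ ν : FinPath G, μ.src = ν.src ∧ f = Set.indicator (ZZ μ ν) 1}

variable {R}

/-- Convolution product. -/
noncomputable def conv (f g : GTrip G → R) : GTrip G → R :=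
  fun γ => ∑ᶠ η ∈ {η : GTrip G | η.1 = γ.1}, f η * g (gmul (ginv η) γ)

/-- Involution `f^*(γ) = star (f (γ⁻¹))`. -/
def starf [StarRing R] (f : GTrip G → R) : GTrip G → R :=
  fun γ => star (f (ginv γ))

/-- `n` is a normalizer of the diagonal. -/
def IsNormalizer [StarRing R] (n : GTrip G → R) : Prop :=
  n ∈ Steinberg R G ∧ ∀ d ∈ Diag R G,
    conv (conv n d) (starf n) ∈ Diag R G ∧ conv (conv (starf n) d) n ∈ Diag R G

/-- `α_n(x) = r(supp(n) x)` (given by a choice; unique for normalizers). -/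
noncomputable def alphaFun (n : GTrip G → R) (x : InfPath G) : InfPath G :=
  if h : ∃ g : GTrip G, n g ≠ 0 ∧ g.2.2 = x then h.choose.1 else x

/-- `dom(n) = supp(n^* n)`, as a subset of the infinite path space. -/
noncomputable def domSet [StarRing R] (n : GTrip G → R) : Set (InfPath G) :=
  {x | conv (starf n) n (unit x) ≠ 0}

/-- `ran(n) = supp(n n^*)`, as a subset of the infinite path space. -/
noncomputable def ranSet [StarRing R] (n : GTrip G → R) : Set (InfPath G) :=
  {x | conv n (starf n) (unit x) ≠ 0}

/-- `d ∘ α_n`, viewed as a function on the groupoid vanishing off `s(supp n)`. -/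
noncomputable def dAlpha (d n : GTrip G → R) : GTrip G → R := fun g =>
  if (g.2.1 = 0 ∧ g.1 = g.2.2 ∧ ∃ h : GTrip G, n h ≠ 0 ∧ h.2.2 = g.2.2)
  then d (unit (alphaFun n g.2.2)) else 0

/-- `p_x`, the characteristic function of the unit `{x}`. -/
noncomputable def ppt (R : Type) [CommRing R] (x : InfPath G) : GTrip G → R :=
  Set.indicator {unit x} 1

/-- `f` is homogeneous of degree `k`. -/
def Homog (k : ℤ) (f : GTrip G → R) : Prop := ∀ g : GTrip G, f g ≠ 0 → g.2.1 = k

def IsCycle (η : FinPath G) : Prop :=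
  0 < η.len ∧ η.src = η.vtx ∧
    ∀ i j, 0 < i → i + 1 < η.len → 0 < j → j + 1 < η.len → i ≠ j →
      G.s (η.edges i) ≠ G.r (η.edges j)

def HasEntrance (η : FinPath G) : Prop :=
  ∃ (e : G.E) (i : ℕ), i < η.len ∧ G.r e = G.r (η.edges i) ∧ e ≠ η.edges i

/-- `z = η η η ⋯`. -/
def IsPeriodicOf (η : FinPath G) (z : InfPath G) : Prop :=
  ∀ i, z.edges i = η.edges (i % η.len)

end LPA

namespace LPA

variable {G : DirGraph} {R : Type} [CommRing R]

lemma finsum_mem_eq_if {α M : Type*} [AddCommMonoid M] (S : Set α) (F : α → M) (a : α)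
    (h : ∀ b ∈ S, b ≠ a → F b = 0) :
    ∑ᶠ b ∈ S, F b = if a ∈ S then F a else 0 := by
  rw [finsum_mem_def, finsum_eq_single _ a]
  · exact Set.indicator_apply S F a
  · intro b hb
    by_cases hbS : b ∈ S
    · rw [Set.indicator_of_mem hbS]; exact h b hbS hb
    · exact Set.indicator_of_notMem hbS _

lemma ppt_apply (x : InfPath G) (g : GTrip G) :
    ppt R x g = if g = unit x then 1 else 0 := by
  simp [ppt, Set.indicator_apply]

lemma conv_def (f g : GTrip G → R) (γ : GTrip G) :
    conv f g γ = ∑ᶠ η ∈ {η : GTrip G | η.1 = γ.1}, f η * g (gmul (ginv η) γ) := rfl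

lemma conv_ppt_left (n : GTrip G → R) (x : InfPath G) (γ : GTrip G) :
    conv (ppt R x) n γ = if γ.1 = x then n γ else 0 := by
  obtain ⟨y, k, z⟩ := γ
  rw [conv_def, finsum_mem_eq_if _ _ (unit x)
    (fun b _ hbne => by rw [ppt_apply, if_neg hbne, zero_mul])]
  by_cases hyx : y = x
  · subst hyx
    simp [unit, gmul, ginv, ppt_apply, Set.mem_setOf_eq]
  · rw [if_neg (by simpa [unit, Set.mem_setOf_eq, eq_comm] using hyx), if_neg hyx]

lemma pnp_apply (n : GTrip G → R) (x : InfPath G) (γ : GTrip G) :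
    conv (conv (ppt R x) n) (ppt R x) γ =
      if γ.1 = x ∧ γ.2.2 = x then n (x, γ.2.1, x) else 0 := by
  obtain ⟨y, k, z⟩ := γ
  rw [conv_def, finsum_mem_eq_if _ _ ((y, k, x) : GTrip G) ?h]
  case h =>
    rintro ⟨u, t, v⟩ hb hbne
    simp only [Set.mem_setOf_eq] at hb
    by_cases hc : gmul (ginv (u, t, v)) (y, k, z) = unit x
    · exfalso
      apply hbne
      simp only [gmul, ginv, unit, Prod.mk.injEq] at hc
      obtain ⟨hv, ht, -⟩ := hc
      have ht' : t = k := by omega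
      simp [hb, ht', hv]
    · rw [ppt_apply, if_neg hc, mul_zero]
  rw [if_pos (by simp [Set.mem_setOf_eq])]
  rw [conv_ppt_left]
  by_cases h1 : y = x <;> by_cases h2 : z = x <;>
    simp [h1, h2, gmul, ginv, unit, ppt_apply, Prod.ext_iff]

lemma conv_starf_ppt [StarRing R] (n : GTrip G → R) (x : InfPath G) (γ : GTrip G) :
    conv (starf n) (ppt R x) γ =
      if γ.2.2 = x then star (n (x, -γ.2.1, γ.1)) else 0 := by
  obtain ⟨y, k, z⟩ := γ
  rw [conv_def, finsum_mem_eq_if _ _ ((y, k, x) : GTrip G) ?h]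
  case h =>
    rintro ⟨u, t, v⟩ hb hbne
    simp only [Set.mem_setOf_eq] at hb
    by_cases hc : gmul (ginv (u, t, v)) (y, k, z) = unit x
    · exfalso
      apply hbne
      simp only [gmul, ginv, unit, Prod.mk.injEq] at hc
      obtain ⟨hv, ht, -⟩ := hc
      have ht' : t = k := by omega
      simp [hb, ht', hv]
    · rw [ppt_apply, if_neg hc, mul_zero]
  rw [if_pos (by simp [Set.mem_setOf_eq])]
  by_cases h2 : z = x <;>
    simp [h2, gmul, ginv, unit, starf, ppt_apply, Prod.ext_iff]

/-- Elements of the diagonal are supported on degree-zero elements. -/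
lemma diag_deg {d : GTrip G → R} (hd : d ∈ Diag R G) :
    ∀ g : GTrip G, d g ≠ 0 → g.2.1 = 0 := by
  refine Submodule.span_induction ?_ ?_ ?_ ?_ hd
  · rintro f ⟨μ, rfl⟩ g hg
    have hmem : g ∈ unitSet (Zset μ) := by
      by_contra hmem
      exact hg (Set.indicator_of_notMem hmem _)
    obtain ⟨y, -, rfl⟩ := hmem
    rfl
  · intro g hg; exact absurd rfl hg
  · intro f h _ _ hf hh g hg
    by_cases hfg : f g ≠ 0
    · exact hf g hfg
    · push_neg at hfg
      refine hh g ?_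
      intro hhg
      exact hg (by simp [Pi.add_apply, hfg, hhg])
  · intro a f _ hf g hg
    refine hf g fun hfg => hg ?_
    simp [Pi.smul_apply, hfg]

/-- Elements of the Steinberg algebra have finitely many degrees in their support. -/
lemma steinberg_fin {f : GTrip G → R} (hf : f ∈ Steinberg R G) :
    ({k : ℤ | ∃ g : GTrip G, f g ≠ 0 ∧ g.2.1 = k}).Finite := by
  refine Submodule.span_induction ?_ ?_ ?_ ?_ hf
  · rintro f ⟨μ, ν, -, rfl⟩
    refine (Set.finite_singleton ((μ.len : ℤ) - (ν.len : ℤ))).subset ?_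
    rintro k ⟨g, hg, rfl⟩
    have hmem : g ∈ ZZ μ ν := by
      by_contra hmem
      exact hg (Set.indicator_of_notMem hmem _)
    obtain ⟨z, -, -, hdeg⟩ := hmem
    simp [hdeg]
  · refine Set.Finite.subset (Set.finite_empty) ?_
    rintro k ⟨g, hg, -⟩
    exact absurd rfl hg
  · intro f h _ _ hf hh
    refine (hf.union hh).subset ?_
    rintro k ⟨g, hg, rfl⟩
    by_cases hfg : f g ≠ 0
    · exact Or.inl ⟨g, hfg, rfl⟩
    · push_neg at hfg
      refine Or.inr ⟨g, ?_, rfl⟩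
      intro hhg
      exact hg (by simp [Pi.add_apply, hfg, hhg])
  · intro a f _ hf
    refine hf.subset ?_
    rintro k ⟨g, hg, rfl⟩
    exact ⟨g, fun hfg => hg (by simp [Pi.smul_apply, hfg]), rfl⟩

/-- An isolated infinite path is the unique path in some cylinder set. -/
lemma isolated_cylinder (x : InfPath G) (hx : IsOpen ({x} : Set (InfPath G))) :
    ∃ μ : FinPath G, Zset μ = {x} := by
  have hbasis := TopologicalSpace.isTopologicalBasis_of_subbasis
    (s := {S : Set (InfPath G) | ∃ μ : FinPath G, S = Zset μ}) rfl
  obtain ⟨v, ⟨f, ⟨hffin, hfsub⟩, rfl⟩, hxv, hvx⟩ :=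
    hbasis.exists_subset_of_mem_open (Set.mem_singleton x) hx
  have hchoice : ∀ S ∈ f, ∃ L : ℕ, ∀ y : InfPath G,
      (∀ i < L, y.edges i = x.edges i) → y.rng = x.rng → y ∈ S := by
    intro S hS
    obtain ⟨μ, rfl⟩ := hfsub hS
    obtain ⟨hxe, hxr⟩ := Set.mem_sInter.1 hxv _ hS
    refine ⟨μ.len, fun y h1 h2 => ⟨fun i hi => (h1 i hi).trans (hxe i hi), h2.trans hxr⟩⟩
  choose! ℓ hℓ using hchoice
  set N := hffin.toFinset.sup ℓ with hNdef
  have hN : ∀ S ∈ f, ℓ S ≤ N := fun S hS => Finset.le_sup (hffin.mem_toFinset.2 hS)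
  have hZx : ∀ y : InfPath G, (∀ i < N, y.edges i = x.edges i) → y.rng = x.rng → y = x := by
    intro y h1 h2
    exact hvx (Set.mem_sInter.2 fun S hS =>
      hℓ S hS y (fun i hi => h1 i (lt_of_lt_of_le hi (hN S hS))) h2)
  refine ⟨⟨N, x.rng, x.edges, fun i _ => x.compat i, fun _ => rfl⟩, ?_⟩
  ext y
  constructor
  · rintro ⟨h1, h2⟩
    exact hZx y h1 h2
  · rintro rfl
    exact ⟨fun i _ => rfl, rfl⟩

end LPA

open LPA in
/-- If `x` is isolated and `p_x n p_x ≠ 0`, then `p_x n p_x = r 𝟙_{(x,k,x)}`. -/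
theorem pnp_isolated {G : DirGraph} (hrf : RowFinite G) (hns : NoSources G)
    {R : Type} [CommRing R] [IsDomain R] [StarRing R]
    (n : GTrip G → R) (hn : IsNormalizer n) (x : InfPath G)
    (hx : IsOpen ({x} : Set (InfPath G)))
    (h0 : conv (conv (ppt R x) n) (ppt R x) ≠ 0) :
    ∃ (k : ℤ) (r : R),
      conv (conv (ppt R x) n) (ppt R x) =
        Set.indicator ({(x, k, x)} : Set (GTrip G)) (fun _ => r) := by
  classical
  -- `p_x` lies in the diagonal
  obtain ⟨μ, hZ⟩ := isolated_cylinder x hx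
  have hppt : ppt R x ∈ Diag R G := by
    refine Submodule.subset_span ⟨μ, ?_⟩
    have hU : unitSet (Zset μ) = {unit x} := by
      rw [hZ]; ext g; simp [unitSet]
    rw [hU]; rfl
  -- the relevant element of the diagonal
  have hD : conv (conv (starf n) (ppt R x)) n ∈ Diag R G := (hn.2 (ppt R x) hppt).2
  -- finiteness of the degree support
  have hfin : ({k : ℤ | n (x, k, x) ≠ 0}).Finite :=
    (steinberg_fin hn.1).subset fun k hk => ⟨(x, k, x), hk, rfl⟩
  -- nonemptiness from h0
  obtain ⟨γ, hγ⟩ := Function.ne_iff.1 h0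
  rw [pnp_apply] at hγ
  have hγ' : n (x, γ.2.1, x) ≠ 0 := by
    by_cases hc : γ.1 = x ∧ γ.2.2 = x
    · simpa [hc] using hγ
    · simp [hc] at hγ
  set s : Finset ℤ := hfin.toFinset with hsdef
  have hmem_s : ∀ k : ℤ, k ∈ s ↔ n (x, k, x) ≠ 0 := fun k => hfin.mem_toFinset
  have hne : s.Nonempty := ⟨γ.2.1, (hmem_s _).2 hγ'⟩
  set A := s.max' hne with hA
  set B := s.min' hne with hB
  -- key: A = B
  have hAB : A = B := by
    by_contra hABne
    have hcne : A - B ≠ 0 := sub_ne_zero.2 hABne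
    -- evaluate the diagonal element at (x, A - B, x)
    have he : conv (conv (starf n) (ppt R x)) n ((x, A - B, x) : GTrip G)
        = star (n (x, B, x)) * n (x, A, x) := by
      have hside : ∀ b ∈ {η : GTrip G | η.1 = (((x, A - B, x) : GTrip G)).1},
          b ≠ ((x, -B, x) : GTrip G) →
          conv (starf n) (ppt R x) b * n (gmul (ginv b) ((x, A - B, x) : GTrip G)) = 0 := by
        rintro ⟨u, t, v⟩ hu hne'
        simp only [Set.mem_setOf_eq] at hu
        by_contra hprod
        have hm2 := left_ne_zero_of_mul hprod
        have hn2 := right_ne_zero_of_mul hprod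
        rw [conv_starf_ppt] at hm2
        by_cases hv : v = x
        · simp only [hv, if_pos rfl] at hm2
          have h1 : n (x, -t, u) ≠ 0 := fun h => hm2 (by simp [h])
          rw [hu] at h1
          have h1' : (-t) ∈ s := (hmem_s _).2 h1
          simp only [gmul, ginv, hv] at hn2
          have h2 : n (x, -t + (A - B), x) ≠ 0 := hn2
          have h2' : (-t + (A - B)) ∈ s := (hmem_s _).2 h2
          have hle1 : -t ≤ A := s.le_max' _ h1'
          have hle2 : -t + (A - B) ≤ A := s.le_max' _ h2'
          have hge1 : B ≤ -t := s.min'_le _ h1'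
          have ht : t = -B := by omega
          exact hne' (by simp [hu, ht, hv])
        · simp [hv] at hm2
      rw [conv_def, finsum_mem_eq_if _ _ ((x, -B, x) : GTrip G) hside]
      rw [if_pos (by simp [Set.mem_setOf_eq])]
      rw [conv_starf_ppt]
      simp only [if_pos rfl]
      have h1 : -(-B) = B := neg_neg B
      have h2 : (gmul (ginv ((x, -B, x) : GTrip G)) ((x, A - B, x) : GTrip G))
          = ((x, A, x) : GTrip G) := by
        simp only [gmul, ginv, Prod.mk.injEq]
        exact ⟨by simp, by omega, by simp⟩
      rw [h2]
      norm_num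
    have hzero : conv (conv (starf n) (ppt R x)) n ((x, A - B, x) : GTrip G) = 0 := by
      by_contra hnz
      exact hcne (diag_deg hD _ hnz)
    rw [he] at hzero
    have hAne : n (x, A, x) ≠ 0 := (hmem_s _).1 (s.max'_mem hne)
    have hBne : n (x, B, x) ≠ 0 := (hmem_s _).1 (s.min'_mem hne)
    have hBne' : star (n (x, B, x)) ≠ 0 := fun h => hBne (by simpa using congrArg star h)
    exact mul_ne_zero hBne' hAne hzero
  -- conclude
  refine ⟨A, n (x, A, x), ?_⟩
  funext γ
  rw [pnp_apply]
  obtain ⟨y, k, z⟩ := γ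
  by_cases hc : y = x ∧ z = x
  · rw [show ((y, k, z) : GTrip G) = ((x, k, x) : GTrip G) by simp [hc.1, hc.2]]
    by_cases hk : k = A
    · subst hk
      simp [Set.indicator_apply]
    · have hk0 : n (x, k, x) = 0 := by
        by_contra hnz
        have hks : k ∈ s := (hmem_s _).2 hnz
        have := s.le_max' _ hks
        have := s.min'_le _ hks
        omega
      have hne2 : ((x, k, x) : GTrip G) ∉ ({(x, A, x)} : Set (GTrip G)) := by
        simp [Prod.ext_iff, hk]
      simp [hk0, Set.indicator_of_notMem hne2]
  · have hne2 : ((y, k, z) : GTrip G) ∉ ({(x, A, x)} : Set (GTrip G)) := by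
      intro h
      simp only [Set.mem_singleton_iff, Prod.mk.injEq] at h
      exact hc ⟨h.1, h.2.2⟩
    simp [hc, Set.indicator_of_notMem hne2]
end

section
/- Let $E$ and $F$ be row-finite directed graphs with no sources, $R$ an integral domain with identity, $\pi : L_R(E) \to L_R(F)$ a ring $*$-isomorphism with $\pi(D(E)) = D(F)$, and $\kappa : E^\infty \to F^\infty$ the induced homeomorphism. Then for every normalizer $n$ of $D(E)$: (a) $x \in \operatorname{dom}(n)$ if and only if $\kappa(x) \in \operatorname{dom}(\pi(n))$, and (b) $\kappa(\alpha_n(x)) = \alpha_{\pi(n)}(\kappa(x))$ for all $x \in \operatorname{dom}(n)$. -/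
open scoped Classical BigOperators

namespace LPA

variable {G : DirGraph}

theorem InfPath.ext' {x y : InfPath G} (h : ∀ i, x.edges i = y.edges i) : x = y := by
  cases x; cases y; congr 1; exact funext h

theorem unit_fst (x : InfPath G) : (unit x).1 = x := rfl
theorem unit_snd (x : InfPath G) : (unit x).2.2 = x := rfl

theorem unit_injective : Function.Injective (unit : InfPath G → GTrip G) := by
  intro x y h
  exact congrArg Prod.fst h

theorem mem_unitSet_iff {S : Set (InfPath G)} {z : InfPath G} :
    unit z ∈ unitSet S ↔ z ∈ S := by
  constructor
  · rintro ⟨x, hx, hxy⟩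
    rw [unit_injective hxy]; exact hx
  · intro h; exact ⟨z, h, rfl⟩

theorem ginv_ginv (g : GTrip G) : ginv (ginv g) = g := by
  simp [ginv]

theorem gtrip_eta (g : GTrip G) : (g.1, g.2.1, g.2.2) = g := rfl

/-- diagonal support property -/
def IsDiagSupp {R : Type} [CommRing R] (d : GTrip G → R) : Prop :=
  ∀ g : GTrip G, d g ≠ 0 → g.2.1 = 0 ∧ g.1 = g.2.2

variable {R : Type} [CommRing R]

theorem diag_supp {d : GTrip G → R} (hd : d ∈ Diag R G) : IsDiagSupp d := by
  refine Submodule.span_induction ?_ ?_ ?_ ?_ hd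
  · rintro f ⟨μ, rfl⟩ g hg
    have : g ∈ unitSet (Zset μ) := by
      by_contra h
      simp [Set.indicator_of_notMem h] at hg
    obtain ⟨x, _, rfl⟩ := this
    exact ⟨rfl, rfl⟩
  · intro g hg; simp at hg
  · intro f₁ f₂ _ _ h1 h2 g hg
    by_cases e1 : f₁ g = 0
    · exact h2 g (by simpa [Pi.add_apply, e1] using hg)
    · exact h1 g e1
  · intro c f _ h g hg
    refine h g ?_
    intro e; simp [Pi.smul_apply, e] at hg

theorem finsum_mem_eq_single' {α : Type*} (F : α → R) (a : α) (s : Set α) (ha : a ∈ s)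
    (h : ∀ b ∈ s, b ≠ a → F b = 0) : ∑ᶠ b ∈ s, F b = F a := by
  rw [finsum_mem_def]
  rw [finsum_eq_single _ a]
  · simp [Set.indicator_of_mem ha]
  · intro b hb
    by_cases hbs : b ∈ s
    · simp [Set.indicator_of_mem hbs, h b hbs hb]
    · simp [Set.indicator_of_notMem hbs]

theorem finsum_mem_zero' {α : Type*} (F : α → R) (s : Set α)
    (h : ∀ b ∈ s, F b = 0) : ∑ᶠ b ∈ s, F b = 0 := by
  rw [finsum_mem_def]
  apply finsum_eq_zero_of_forall_eq_zero
  intro b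
  by_cases hbs : b ∈ s
  · simp [Set.indicator_of_mem hbs, h b hbs]
  · simp [Set.indicator_of_notMem hbs]

theorem finsum_mem_ne_zero {α : Type*} {F : α → R} {s : Set α}
    (h : ∑ᶠ b ∈ s, F b ≠ 0) : ∃ b ∈ s, F b ≠ 0 := by
  by_contra hc
  push_neg at hc
  exact h (finsum_mem_zero' F s hc)

theorem finsum_mem_subset' {α : Type*} (F : α → R) {s t : Set α} (hts : t ⊆ s)
    (h : ∀ b ∈ s, b ∉ t → F b = 0) : ∑ᶠ b ∈ s, F b = ∑ᶠ b ∈ t, F b := by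
  rw [finsum_mem_def, finsum_mem_def]
  congr 1
  funext b
  by_cases hbt : b ∈ t
  · simp [Set.indicator_of_mem hbt, Set.indicator_of_mem (hts hbt)]
  · by_cases hbs : b ∈ s
    · simp [Set.indicator_of_mem hbs, Set.indicator_of_notMem hbt, h b hbs hbt]
    · simp [Set.indicator_of_notMem hbt, Set.indicator_of_notMem hbs]

theorem gmul_ginv_self (γ : GTrip G) : gmul (ginv γ) γ = unit γ.2.2 := by
  simp [gmul, ginv, unit]

theorem conv_right_diag (f d : GTrip G → R) (hd : IsDiagSupp d) (γ : GTrip G) :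
    conv f d γ = f γ * d (unit γ.2.2) := by
  unfold conv
  rw [finsum_mem_eq_single' _ γ _ (by simp)]
  · rw [gmul_ginv_self]
  · intro η hη hne
    by_cases hdz : d (gmul (ginv η) γ) = 0
    · simp [hdz]
    · exfalso
      obtain ⟨h1, h2⟩ := hd _ hdz
      simp only [gmul, ginv] at h1 h2
      apply hne
      have hk : η.2.1 = γ.2.1 := by omega
      have : η.1 = γ.1 := hη
      exact Prod.ext this (Prod.ext hk h2)

theorem conv_left_diag (d f : GTrip G → R) (hd : IsDiagSupp d) (γ : GTrip G) :
    conv d f γ = d (unit γ.1) * f γ := by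
  unfold conv
  rw [finsum_mem_eq_single' _ (unit γ.1) _ (by simp [unit])]
  · congr 1
    simp [gmul, ginv, unit]
  · intro η hη hne
    by_cases hdz : d η = 0
    · simp [hdz]
    · exfalso
      obtain ⟨h1, h2⟩ := hd _ hdz
      apply hne
      have : η.1 = γ.1 := hη
      exact Prod.ext this (Prod.ext h1 (h2.symm.trans this))

end LPA
namespace LPA

variable {G : DirGraph}

theorem isConcat_edges_lt {μ : FinPath G} {z x : InfPath G} (h : IsConcat μ z x)
    {i : ℕ} (hi : i < μ.len) : x.edges i = μ.edges i := by
  rw [h.2 i, if_pos hi]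

theorem isConcat_edges_ge {μ : FinPath G} {z x : InfPath G} (h : IsConcat μ z x)
    {i : ℕ} (hi : μ.len ≤ i) : x.edges i = z.edges (i - μ.len) := by
  rw [h.2 i, if_neg (by omega)]

theorem isConcat_shift {μ : FinPath G} {z x : InfPath G} (h : IsConcat μ z x)
    (i : ℕ) : z.edges i = x.edges (i + μ.len) := by
  rw [isConcat_edges_ge h (by omega)]
  congr 1
  omega

theorem isConcat_z_unique {μ : FinPath G} {z z' x : InfPath G} (h : IsConcat μ z x)
    (h' : IsConcat μ z' x) : z = z' := by
  apply InfPath.ext'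
  intro i
  rw [isConcat_shift h, isConcat_shift h']

theorem isConcat_x_unique {μ : FinPath G} {z x x' : InfPath G} (h : IsConcat μ z x)
    (h' : IsConcat μ z x') : x = x' := by
  apply InfPath.ext'
  intro i
  rw [h.2 i, h'.2 i]

theorem isConcat_mem_Zset {μ : FinPath G} {z x : InfPath G} (h : IsConcat μ z x) :
    x ∈ Zset μ := by
  constructor
  · intro i hi; exact isConcat_edges_lt h hi
  · by_cases h0 : μ.len = 0
    · have hx : x = z := by
        apply InfPath.ext'; intro i
        rw [h.2 i, if_neg (by omega)]
        congr 1; omega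
      rw [hx]
      rw [h.1]
      simp [FinPath.src, h0]
    · show G.r (x.edges 0) = μ.vtx
      rw [isConcat_edges_lt h (by omega), (μ.vtx_eq (by omega))]

/-- the shift of an infinite path by `m`. -/
def shiftI (x : InfPath G) (m : ℕ) : InfPath G :=
  ⟨fun i => x.edges (i + m), fun i => by
    have := x.compat (i + m)
    show G.s (x.edges (i + m)) = G.r (x.edges (i + 1 + m))
    rw [show i + 1 + m = i + m + 1 by omega]
    exact this⟩

theorem mem_Zset_concat {μ : FinPath G} {x : InfPath G} (hx : x ∈ Zset μ) :
    IsConcat μ (shiftI x μ.len) x := by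
  constructor
  · show G.r (x.edges (0 + μ.len)) = μ.src
    by_cases h0 : μ.len = 0
    · rw [FinPath.src, if_pos h0]
      rw [show (0 + μ.len) = 0 by omega]
      exact hx.2
    · rw [FinPath.src, if_neg h0]
      rw [show (0 + μ.len) = (μ.len - 1) + 1 by omega]
      rw [← x.compat (μ.len - 1)]
      congr 1
      exact hx.1 _ (by omega)
  · intro i
    by_cases hi : i < μ.len
    · rw [if_pos hi]; exact hx.1 i hi
    · rw [if_neg hi]
      show x.edges i = x.edges (i - μ.len + μ.len)
      congr 1; omega

theorem unitSet_Zset_eq_ZZ (μ : FinPath G) : unitSet (Zset μ) = ZZ μ μ := by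
  ext g
  constructor
  · rintro ⟨x, hx, rfl⟩
    exact ⟨shiftI x μ.len, mem_Zset_concat hx, mem_Zset_concat hx, by simp [unit]⟩
  · rintro ⟨z, h1, h2, hk⟩
    have he : g.1 = g.2.2 := isConcat_x_unique h1 h2
    have hk0 : g.2.1 = 0 := by rw [hk]; ring
    refine ⟨g.1, isConcat_mem_Zset h1, ?_⟩
    rw [← gtrip_eta g, he, hk0]
    rfl

variable {R : Type} [CommRing R]

theorem diag_le_steinberg : (Diag R G : Set (GTrip G → R)) ⊆ (Steinberg R G : Set (GTrip G → R)) := by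
  intro f hf
  simp only [SetLike.mem_coe] at hf ⊢
  refine Submodule.span_le.2 ?_ hf
  rintro f ⟨μ, rfl⟩
  apply Submodule.subset_span
  exact ⟨μ, μ, rfl, by rw [unitSet_Zset_eq_ZZ]⟩

theorem ginv_mem_ZZ {μ ν : FinPath G} {g : GTrip G} :
    ginv g ∈ ZZ μ ν ↔ g ∈ ZZ ν μ := by
  constructor
  · rintro ⟨z, h1, h2, hk⟩
    exact ⟨z, h2, h1, by simp only [ginv] at hk ⊢; omega⟩
  · rintro ⟨z, h1, h2, hk⟩
    exact ⟨z, h2, h1, by simp only [ginv]; omega⟩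

theorem starf_mem [StarRing R] {f : GTrip G → R} (hf : f ∈ Steinberg R G) :
    starf f ∈ Steinberg R G := by
  refine Submodule.span_induction ?_ ?_ ?_ ?_ hf
  · rintro f ⟨μ, ν, hsrc, rfl⟩
    apply Submodule.subset_span
    refine ⟨ν, μ, hsrc.symm, ?_⟩
    funext γ
    show star (Set.indicator (ZZ μ ν) 1 (ginv γ)) = Set.indicator (ZZ ν μ) 1 γ
    by_cases h : γ ∈ ZZ ν μ
    · rw [Set.indicator_of_mem h, Set.indicator_of_mem (ginv_mem_ZZ.2 h)]
      simp
    · rw [Set.indicator_of_notMem h,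
        Set.indicator_of_notMem (fun hc => h (ginv_mem_ZZ.1 hc))]
      simp
  · have : starf (0 : GTrip G → R) = 0 := by funext γ; simp [starf]
    rw [this]; exact Submodule.zero_mem _
  · intro f₁ f₂ _ _ h1 h2
    have : starf (f₁ + f₂) = starf f₁ + starf f₂ := by
      funext γ; simp [starf, star_add]
    rw [this]; exact Submodule.add_mem _ h1 h2
  · intro c f _ h
    have : starf (c • f) = star c • starf f := by
      funext γ; simp [starf, mul_comm]
    rw [this]; exact Submodule.smul_mem _ _ h

end LPA
namespace LPA

variable {G : DirGraph}

/-- initial segment of an infinite path -/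
def iseg (x : InfPath G) (L : ℕ) : FinPath G :=
  ⟨L, x.rng, x.edges, fun i hi => x.compat i, fun _ => rfl⟩

theorem mem_iseg_self (x : InfPath G) (L : ℕ) : x ∈ Zset (iseg x L) :=
  ⟨fun i _ => rfl, rfl⟩

theorem mem_iseg_edges {x z : InfPath G} {L : ℕ} (h : z ∈ Zset (iseg x L))
    {i : ℕ} (hi : i < L) : z.edges i = x.edges i := h.1 i hi

theorem exists_ne_edges {x z : InfPath G} (h : z ≠ x) : ∃ i, z.edges i ≠ x.edges i := by
  by_contra hc
  push_neg at hc
  exact h (InfPath.ext' hc)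

/-- separation of a point from a finite set by a cylinder -/
theorem exists_sep (x : InfPath G) (B : Set (InfPath G)) (hB : B.Finite) :
    ∃ L : ℕ, ∀ z ∈ B, z ≠ x → z ∉ Zset (iseg x L) := by
  classical
  set ι : InfPath G → ℕ := fun z =>
    if h : ∃ i, z.edges i ≠ x.edges i then Classical.choose h else 0 with hι
  refine ⟨(hB.toFinset.sup ι) + 1, ?_⟩
  intro z hz hne hmem
  have hex : ∃ i, z.edges i ≠ x.edges i := exists_ne_edges hne
  have hspec := Classical.choose_spec hex
  have hle : ι z ≤ hB.toFinset.sup ι := Finset.le_sup (hB.mem_toFinset.2 hz)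
  have : ι z = Classical.choose hex := by rw [hι]; simp [hex]
  apply hspec
  rw [← this]
  exact mem_iseg_edges hmem (by omega)

theorem ZZ_src_unique {μ ν : FinPath G} {g g' : GTrip G} (h : g ∈ ZZ μ ν)
    (h' : g' ∈ ZZ μ ν) (e : g.2.2 = g'.2.2) : g = g' := by
  obtain ⟨z, h1, h2, hk⟩ := h
  obtain ⟨z', h1', h2', hk'⟩ := h'
  have hz : z = z' := by
    apply InfPath.ext'; intro i
    rw [isConcat_shift h2, isConcat_shift h2', e]
  subst hz
  have e1 : g.1 = g'.1 := isConcat_x_unique h1 h1'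
  exact Prod.ext e1 (Prod.ext (hk.trans hk'.symm) e)

theorem ZZ_rng_unique {μ ν : FinPath G} {g g' : GTrip G} (h : g ∈ ZZ μ ν)
    (h' : g' ∈ ZZ μ ν) (e : g.1 = g'.1) : g = g' := by
  obtain ⟨z, h1, h2, hk⟩ := h
  obtain ⟨z', h1', h2', hk'⟩ := h'
  have hz : z = z' := by
    apply InfPath.ext'; intro i
    rw [isConcat_shift h1, isConcat_shift h1', e]
  subst hz
  have e1 : g.2.2 = g'.2.2 := isConcat_x_unique h2 h2'
  exact Prod.ext e (Prod.ext (hk.trans hk'.symm) e1)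

variable {R : Type} [CommRing R]

theorem indicator_ne_zero_mem {S : Set (GTrip G)} {g : GTrip G}
    (h : Set.indicator S (1 : GTrip G → R) g ≠ 0) : g ∈ S := by
  by_contra hc
  exact h (Set.indicator_of_notMem hc _)

theorem fiber_finite {f : GTrip G → R} (hf : f ∈ Steinberg R G) :
    (∀ x : InfPath G, {g : GTrip G | f g ≠ 0 ∧ g.2.2 = x}.Finite) ∧
    (∀ x : InfPath G, {g : GTrip G | f g ≠ 0 ∧ g.1 = x}.Finite) := by
  refine Submodule.span_induction ?_ ?_ ?_ ?_ hf
  · rintro f ⟨μ, ν, hsrc, rfl⟩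
    constructor
    · intro x
      apply Set.Subsingleton.finite
      intro g hg g' hg'
      exact ZZ_src_unique (indicator_ne_zero_mem hg.1) (indicator_ne_zero_mem hg'.1)
        (hg.2.trans hg'.2.symm)
    · intro x
      apply Set.Subsingleton.finite
      intro g hg g' hg'
      exact ZZ_rng_unique (indicator_ne_zero_mem hg.1) (indicator_ne_zero_mem hg'.1)
        (hg.2.trans hg'.2.symm)
  · constructor <;> intro x <;>
      · apply Set.Finite.subset (Set.finite_empty)
        intro g hg; simp at hg
  · intro f₁ f₂ _ _ h1 h2
    constructor <;> intro x
    · apply Set.Finite.subset ((h1.1 x).union (h2.1 x))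
      rintro g ⟨hg, rfl⟩
      by_cases e1 : f₁ g = 0
      · exact Or.inr ⟨fun e2 => hg (by simp [Pi.add_apply, e1, e2]), rfl⟩
      · exact Or.inl ⟨e1, rfl⟩
    · apply Set.Finite.subset ((h1.2 x).union (h2.2 x))
      rintro g ⟨hg, rfl⟩
      by_cases e1 : f₁ g = 0
      · exact Or.inr ⟨fun e2 => hg (by simp [Pi.add_apply, e1, e2]), rfl⟩
      · exact Or.inl ⟨e1, rfl⟩
  · intro c f _ h
    constructor <;> intro x
    · apply Set.Finite.subset (h.1 x)
      rintro g ⟨hg, rfl⟩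
      exact ⟨fun e => hg (by simp [Pi.smul_apply, e]), rfl⟩
    · apply Set.Finite.subset (h.2 x)
      rintro g ⟨hg, rfl⟩
      exact ⟨fun e => hg (by simp [Pi.smul_apply, e]), rfl⟩

end LPA
namespace LPA

variable {G : DirGraph} {R : Type} [CommRing R] [StarRing R]

theorem ginv_bijOn (x : InfPath G) :
    Set.BijOn (ginv : GTrip G → GTrip G) {g : GTrip G | g.2.2 = x} {η : GTrip G | η.1 = x} := by
  refine ⟨fun g hg => hg, fun g hg g' hg' e => ?_, fun η hη => ?_⟩
  · rw [← ginv_ginv g, e, ginv_ginv]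
  · exact ⟨ginv η, hη, ginv_ginv η⟩

theorem Phi_eval (n d : GTrip G → R) (hd : IsDiagSupp d) (γ : GTrip G) :
    conv (conv (starf n) d) n γ =
      ∑ᶠ g ∈ {g : GTrip G | g.2.2 = γ.1},
        star (n g) * (d (unit g.1) * n (g.1, g.2.1 + γ.2.1, γ.2.2)) := by
  show (∑ᶠ η ∈ {η : GTrip G | η.1 = γ.1}, conv (starf n) d η * n (gmul (ginv η) γ)) = _
  refine Eq.symm (finsum_mem_eq_of_bijOn ginv (ginv_bijOn γ.1) ?_)
  intro g hg
  have h1 : ginv (ginv g) = g := ginv_ginv g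
  rw [conv_right_diag _ _ hd, h1]
  show star (n g) * (d (unit g.1) * n (g.1, g.2.1 + γ.2.1, γ.2.2)) =
    starf n (ginv g) * d (unit (ginv g).2.2) * n (gmul g γ)
  rw [mul_assoc]
  congr 1
  show star (n g) = star (n (ginv (ginv g)))
  rw [h1]

theorem Psi_eval (n d : GTrip G → R) (hd : IsDiagSupp d) (γ : GTrip G) :
    conv (conv n d) (starf n) γ =
      ∑ᶠ η ∈ {η : GTrip G | η.1 = γ.1},
        n η * (d (unit η.2.2) * star (n (γ.2.2, η.2.1 - γ.2.1, η.2.2))) := by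
  show (∑ᶠ η ∈ {η : GTrip G | η.1 = γ.1}, conv n d η * starf n (gmul (ginv η) γ)) = _
  apply finsum_mem_congr rfl
  intro η hη
  rw [conv_right_diag _ _ hd]
  show n η * d (unit η.2.2) * star (n (ginv (gmul (ginv η) γ))) = _
  have : ginv (gmul (ginv η) γ) = (γ.2.2, η.2.1 - γ.2.1, η.2.2) := by
    show ((γ.2.2, -(-η.2.1 + γ.2.1), η.2.2) : GTrip G) = _
    rw [show -(-η.2.1 + γ.2.1) = η.2.1 - γ.2.1 by ring]
  rw [this, mul_assoc]

theorem nstarn_eval (n : GTrip G → R) (x : InfPath G) :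
    conv (starf n) n (unit x) = ∑ᶠ g ∈ {g : GTrip G | g.2.2 = x}, star (n g) * n g := by
  show (∑ᶠ η ∈ {η : GTrip G | η.1 = x}, starf n η * n (gmul (ginv η) (unit x))) = _
  refine Eq.symm (finsum_mem_eq_of_bijOn ginv (ginv_bijOn x) ?_)
  intro g hg
  have h1 : ginv (ginv g) = g := ginv_ginv g
  show star (n g) * n g = star (n (ginv (ginv g))) * n (gmul (ginv (ginv g)) (unit x))
  rw [h1]
  congr 2
  show g = (g.1, g.2.1 + 0, x)
  have hg' : g.2.2 = x := hg
  rw [add_zero, ← hg', gtrip_eta]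

end LPA
namespace LPA

variable {G : DirGraph} {R : Type} [CommRing R] [IsDomain R] [StarRing R]

/-- top-coefficient evaluation of a cross-correlation sum -/
theorem corr_top (a b : ℤ → R) (m₁ j₁ : ℤ)
    (hm : a m₁ ≠ 0) (hm' : ∀ m, a m ≠ 0 → m ≤ m₁)
    (hj : b j₁ ≠ 0) (hj' : ∀ j, b j ≠ 0 → j₁ ≤ j) :
    ∑ᶠ m : ℤ, a m * star (b (m - (m₁ - j₁))) = a m₁ * star (b j₁) := by
  rw [finsum_eq_single _ m₁]
  · rw [show m₁ - (m₁ - j₁) = j₁ by ring]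
  · intro m hne
    by_cases ha : a m = 0
    · rw [ha, zero_mul]
    · by_cases hb : b (m - (m₁ - j₁)) = 0
      · rw [hb, star_zero, mul_zero]
      · exfalso
        have h1 := hm' m ha
        have h2 := hj' _ hb
        omega

/-- Uniqueness of the support element over a given source, for normalizers. -/
theorem src_unique {n : GTrip G → R}
    (hfib : ∀ w : InfPath G, {g : GTrip G | n g ≠ 0 ∧ g.1 = w}.Finite)
    (hΨ : ∀ d ∈ Diag R G, ∀ γ : GTrip G, ¬(γ.2.1 = 0 ∧ γ.1 = γ.2.2) →
      conv (conv n d) (starf n) γ = 0) :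
    ∀ g g' : GTrip G, n g ≠ 0 → n g' ≠ 0 → g.2.2 = g'.2.2 → g = g' := by
  intro g g' hg hg' hsrc
  set w := g.1 with hw
  set w' := g'.1 with hw'
  set x := g.2.2 with hx
  set a : ℤ → R := fun m => n (w, m, x) with ha
  set b : ℤ → R := fun j => n (w', j, x) with hb
  have hak : a g.2.1 ≠ 0 := by
    show n (w, g.2.1, x) ≠ 0
    rw [hw, hx, gtrip_eta]; exact hg
  have hbk : b g'.2.1 ≠ 0 := by
    show n (w', g'.2.1, x) ≠ 0
    rw [hw', hsrc, gtrip_eta]; exact hg'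
  -- separation cylinder
  obtain ⟨L, hL⟩ := exists_sep x ((fun η : GTrip G => η.2.2) '' {η | n η ≠ 0 ∧ η.1 = w})
    ((hfib w).image _)
  set d : GTrip G → R := Set.indicator (unitSet (Zset (iseg x L))) 1 with hd
  have hdDiag : d ∈ Diag R G := Submodule.subset_span ⟨iseg x L, rfl⟩
  have hdsupp : IsDiagSupp d := diag_supp hdDiag
  have hdx : d (unit x) = 1 := by
    rw [hd, Set.indicator_of_mem (mem_unitSet_iff.2 (mem_iseg_self x L))]; rfl
  have hdo : ∀ η : GTrip G, n η ≠ 0 → η.1 = w → η.2.2 ≠ x → d (unit η.2.2) = 0 := by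
    intro η hη hη1 hne
    rw [hd, Set.indicator_of_notMem]
    intro hmem
    exact hL η.2.2 ⟨η, ⟨hη, hη1⟩, rfl⟩ hne (mem_unitSet_iff.1 hmem)
  -- key correlation identities
  have key : ∀ t : ℤ, (w ≠ w' ∨ t ≠ 0) →
      ∑ᶠ m : ℤ, a m * star (b (m - t)) = 0 := by
    intro t ht
    have hγ : ¬(((w, t, w') : GTrip G).2.1 = 0 ∧ ((w, t, w') : GTrip G).1 = ((w, t, w') : GTrip G).2.2) := by
      simp only []
      rintro ⟨h1, h2⟩
      rcases ht with h | h
      · exact h h2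
      · exact h h1
    have h0 := hΨ d hdDiag (w, t, w') hγ
    rw [Psi_eval n d hdsupp] at h0
    -- restrict the sum
    rw [finsum_mem_subset' _ (t := Set.range (fun m : ℤ => ((w, m, x) : GTrip G)))] at h0
    · rw [finsum_mem_range (by intro m m' e; simpa using congrArg (fun p : GTrip G => p.2.1) e)] at h0
      rw [← h0]
      apply finsum_congr
      intro m
      show a m * star (b (m - t)) = n (w, m, x) * (d (unit x) * star (n (w', m - t, x)))
      rw [hdx, one_mul]
    · rintro η ⟨m, rfl⟩; rfl
    · intro η hη hnmem
      by_cases hn0 : n η = 0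
      · rw [hn0, zero_mul]
      · have hη1 : η.1 = w := hη
        have hne : η.2.2 ≠ x := by
          intro he
          apply hnmem
          exact ⟨η.2.1, by rw [← gtrip_eta η, hη1, he]⟩
        rw [hdo η hn0 hη1 hne, zero_mul, mul_zero]
  -- finite supports
  have hfa : {m : ℤ | a m ≠ 0}.Finite := by
    apply Set.Finite.subset (((hfib w).image (fun η : GTrip G => η.2.1)))
    intro m hm
    exact ⟨(w, m, x), ⟨hm, rfl⟩, rfl⟩
  have hfb : {j : ℤ | b j ≠ 0}.Finite := by
    apply Set.Finite.subset (((hfib w').image (fun η : GTrip G => η.2.1)))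
    intro j hj
    exact ⟨(w', j, x), ⟨hj, rfl⟩, rfl⟩
  -- extract max/min
  have hane : hfa.toFinset.Nonempty := ⟨g.2.1, hfa.mem_toFinset.2 hak⟩
  have hbne : hfb.toFinset.Nonempty := ⟨g'.2.1, hfb.mem_toFinset.2 hbk⟩
  set m₁ := hfa.toFinset.max' hane with hm₁
  set j₁ := hfb.toFinset.min' hbne with hj₁
  have ham : a m₁ ≠ 0 := hfa.mem_toFinset.1 (hfa.toFinset.max'_mem hane)
  have hbm : b j₁ ≠ 0 := hfb.mem_toFinset.1 (hfb.toFinset.min'_mem hbne)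
  have ham' : ∀ m, a m ≠ 0 → m ≤ m₁ := fun m hm =>
    hfa.toFinset.le_max' m (hfa.mem_toFinset.2 hm)
  have hbm' : ∀ j, b j ≠ 0 → j₁ ≤ j := fun j hj =>
    hfb.toFinset.min'_le j (hfb.mem_toFinset.2 hj)
  have htop := corr_top a b m₁ j₁ ham ham' hbm hbm'
  -- decide cases
  by_cases hww : w = w'
  · -- same range; show same middle
    have hmid : g.2.1 = g'.2.1 := by
      by_contra hne
      -- then supp a has two distinct elements, so m₁ ≠ j₁ since b = a
      have hbb : b = a := by rw [ha, hb, hww]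
      rw [hbb] at htop hbm hbm'
      by_cases ht0 : m₁ - j₁ = 0
      · -- supp a is a singleton
        have h1 : g.2.1 ≤ m₁ := ham' _ hak
        have h2 : j₁ ≤ g.2.1 := hbm' _ hak
        have h1' : g'.2.1 ≤ m₁ := ham' _ (by rw [← hbb]; exact hbk)
        have h2' : j₁ ≤ g'.2.1 := hbm' _ (by rw [← hbb]; exact hbk)
        omega
      · have h0 := key (m₁ - j₁) (Or.inr ht0)
        rw [hbb] at h0
        rw [htop] at h0
        exact (mul_ne_zero ham (by rwa [star_ne_zero])) h0
    refine Prod.ext hww (Prod.ext hmid hsrc)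
  · have h0 := key (m₁ - j₁) (Or.inl hww)
    rw [htop] at h0
    exact absurd h0 (mul_ne_zero ham (by rwa [star_ne_zero]))

end LPA
namespace LPA

variable {G : DirGraph}

/-- tail of a finite path from position `m` -/
def tailP (σ : FinPath G) (m : ℕ) (hm : m < σ.len) : FinPath G where
  len := σ.len - m
  vtx := G.r (σ.edges m)
  edges := fun i => σ.edges (m + i)
  compat := fun i hi => by
    show G.s (σ.edges (m + i)) = G.r (σ.edges (m + (i + 1)))
    rw [show m + (i + 1) = m + i + 1 by omega]
    exact σ.compat (m + i) (by omega)
  vtx_eq := fun _ => by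
    show G.r (σ.edges m) = G.r (σ.edges (m + 0))
    rw [Nat.add_zero]

/-- append of finite paths -/
def appendP (μ β : FinPath G) (hβ : 0 < β.len)
    (hc : μ.len ≠ 0 → G.s (μ.edges (μ.len - 1)) = G.r (β.edges 0)) : FinPath G where
  len := μ.len + β.len
  vtx := if μ.len = 0 then β.vtx else μ.vtx
  edges := fun i => if i < μ.len then μ.edges i else β.edges (i - μ.len)
  compat := fun i hi => by
    show G.s (if i < μ.len then μ.edges i else β.edges (i - μ.len)) =
      G.r (if i + 1 < μ.len then μ.edges (i + 1) else β.edges (i + 1 - μ.len))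
    by_cases h1 : i + 1 < μ.len
    · rw [if_pos (by omega), if_pos h1]
      exact μ.compat i h1
    · by_cases h2 : i + 1 = μ.len
      · rw [if_pos (by omega), if_neg (by omega), show i + 1 - μ.len = 0 by omega]
        have := hc (by omega)
        rw [show μ.len - 1 = i by omega] at this
        exact this
      · rw [if_neg (by omega), if_neg (by omega),
          show i + 1 - μ.len = i - μ.len + 1 by omega]
        exact β.compat (i - μ.len) (by omega)
  vtx_eq := fun h => by
    show (if μ.len = 0 then β.vtx else μ.vtx) =
      G.r (if 0 < μ.len then μ.edges 0 else β.edges (0 - μ.len))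
    by_cases h0 : μ.len = 0
    · rw [if_pos h0, if_neg (by omega), Nat.zero_sub]
      exact β.vtx_eq hβ
    · rw [if_neg h0, if_pos (by omega)]
      exact μ.vtx_eq (by omega)

/-- concatenation of a finite path with an infinite path -/
def consFI (β : FinPath G) (z : InfPath G) (h : z.rng = β.src) : InfPath G where
  edges := fun i => if i < β.len then β.edges i else z.edges (i - β.len)
  compat := fun i => by
    show G.s (if i < β.len then β.edges i else z.edges (i - β.len)) =
      G.r (if i + 1 < β.len then β.edges (i + 1) else z.edges (i + 1 - β.len))
    by_cases h1 : i + 1 < β.len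
    · rw [if_pos (by omega), if_pos h1]
      exact β.compat i h1
    · by_cases h2 : i + 1 = β.len
      · rw [if_pos (by omega), if_neg (by omega), show i + 1 - β.len = 0 by omega]
        have hz : z.rng = β.src := h
        rw [FinPath.src, if_neg (by omega), show β.len - 1 = i by omega] at hz
        exact hz.symm
      · rw [if_neg (by omega), if_neg (by omega),
          show i + 1 - β.len = i - β.len + 1 by omega]
        exact z.compat (i - β.len)

theorem Zset_inter_sub {σ ν : FinPath G} (hlen : σ.len ≤ ν.len) {x : InfPath G}
    (h1 : x ∈ Zset σ) (h2 : x ∈ Zset ν) :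
    (∀ i < σ.len, ν.edges i = σ.edges i) ∧ σ.vtx = ν.vtx :=
  ⟨fun i hi => (h2.1 i (lt_of_lt_of_le hi hlen)).symm.trans (h1.1 i hi),
    h1.2.symm.trans h2.2⟩

theorem Zset_mono {σ ν : FinPath G} (hlen : σ.len ≤ ν.len)
    (hC : (∀ i < σ.len, ν.edges i = σ.edges i) ∧ σ.vtx = ν.vtx) {x : InfPath G}
    (h : x ∈ Zset ν) : x ∈ Zset σ :=
  ⟨fun i hi => (h.1 i (lt_of_lt_of_le hi hlen)).trans (hC.1 i hi),
    h.2.trans hC.2.symm⟩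

theorem ZZ_inter_case_b (μ ν σ : FinPath G) (hsrc : μ.src = ν.src) (hlen : ν.len < σ.len)
    (hD : (∀ i < ν.len, σ.edges i = ν.edges i) ∧ ν.vtx = σ.vtx) :
    ∃ μ' : FinPath G, μ'.src = σ.src ∧
      ZZ μ ν ∩ {γ : GTrip G | γ.2.2 ∈ Zset σ} = ZZ μ' σ := by
  set β := tailP σ ν.len hlen with hβdefn
  have hβlen : β.len = σ.len - ν.len := rfl
  have hβedges : ∀ i, β.edges i = σ.edges (ν.len + i) := fun _ => rfl
  have hβ : 0 < β.len := by omega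
  have f3 : ν.src = G.r (σ.edges ν.len) := by
    by_cases h0 : ν.len = 0
    · rw [FinPath.src, if_pos h0, hD.2, h0]
      exact σ.vtx_eq (by omega)
    · rw [FinPath.src, if_neg h0, ← hD.1 (ν.len - 1) (by omega),
        show ν.len = ν.len - 1 + 1 by omega]
      exact σ.compat (ν.len - 1) (by omega)
  have hc : μ.len ≠ 0 → G.s (μ.edges (μ.len - 1)) = G.r (β.edges 0) := by
    intro h0
    have : μ.src = G.s (μ.edges (μ.len - 1)) := by rw [FinPath.src, if_neg h0]
    rw [← this, hsrc, f3, hβedges 0, Nat.add_zero]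
  set μ' := appendP μ β hβ hc with hμ'defn
  have hμ'len : μ'.len = μ.len + β.len := rfl
  have hμ'edges : ∀ i, μ'.edges i = if i < μ.len then μ.edges i else β.edges (i - μ.len) :=
    fun _ => rfl
  have f4 : σ.src = G.s (β.edges (β.len - 1)) := by
    rw [FinPath.src, if_neg (by omega), hβedges]
    congr 2
    omega
  have hβsrc : β.src = σ.src := by
    rw [FinPath.src, if_neg (by omega)]
    exact f4.symm
  have f5 : μ'.src = σ.src := by
    rw [FinPath.src, if_neg (by omega), hμ'edges, if_neg (by omega), f4]
    congr 2
    show μ.len + β.len - 1 - μ.len = β.len - 1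
    omega
  refine ⟨μ', f5, ?_⟩
  ext γ
  constructor
  · rintro ⟨⟨z, hc1, hc2, hk⟩, hzσ⟩
    have hzσ' : γ.2.2 ∈ Zset σ := hzσ
    set z' := shiftI z β.len with hz'defn
    have hz'edges : ∀ j, z'.edges j = z.edges (j + β.len) := fun _ => rfl
    have c1 : ∀ i, i < β.len → z.edges i = β.edges i := by
      intro i hi
      rw [isConcat_shift hc2 i, hzσ'.1 (i + ν.len) (by omega), hβedges]
      congr 1
      omega
    have hrng : z'.rng = G.s (β.edges (β.len - 1)) := by
      show G.r (z'.edges 0) = _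
      rw [hz'edges, Nat.zero_add, ← c1 (β.len - 1) (by omega),
        show β.len = β.len - 1 + 1 by omega]
      exact (z.compat (β.len - 1)).symm
    refine ⟨z', ⟨?_, ?_⟩, ⟨?_, ?_⟩, ?_⟩
    · rw [hrng, f5, f4]
    · intro i
      rw [hc1.2 i]
      by_cases h1 : i < μ.len
      · rw [if_pos h1, if_pos (show i < μ'.len by omega), hμ'edges, if_pos h1]
      · by_cases h2 : i < μ'.len
        · rw [if_neg h1, if_pos h2, hμ'edges, if_neg h1]
          exact c1 (i - μ.len) (by omega)
        · rw [if_neg h1, if_neg h2, hz'edges]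
          congr 1
          omega
    · rw [hrng, f4]
    · intro i
      by_cases h1 : i < σ.len
      · rw [if_pos h1]
        exact hzσ'.1 i h1
      · rw [if_neg h1, isConcat_edges_ge hc2 (by omega), hz'edges]
        congr 1
        omega
    · rw [hk, hμ'len]
      omega
  · rintro ⟨z', hc1', hc2', hk'⟩
    have hz'edges : ∀ j, z'.edges j = z'.edges j := fun _ => rfl
    have h2 : z'.rng = β.src := hc2'.1.trans hβsrc.symm
    set z := consFI β z' h2 with hzdefn
    have hzedges : ∀ i, z.edges i = if i < β.len then β.edges i else z'.edges (i - β.len) :=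
      fun _ => rfl
    have hzrng : z.rng = ν.src := by
      show G.r (z.edges 0) = ν.src
      rw [hzedges, if_pos hβ, f3, hβedges, Nat.add_zero]
    constructor
    · refine ⟨z, ⟨?_, ?_⟩, ⟨?_, ?_⟩, ?_⟩
      · rw [hzrng, hsrc]
      · intro i
        rw [hc1'.2 i]
        by_cases h1 : i < μ.len
        · rw [if_pos h1, if_pos (show i < μ'.len by omega), hμ'edges, if_pos h1]
        · by_cases hb : i < μ'.len
          · rw [if_pos hb, if_neg h1, hμ'edges, if_neg h1, hzedges,
              if_pos (show i - μ.len < β.len by omega)]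
          · rw [if_neg hb, if_neg h1, hzedges, if_neg (show ¬ i - μ.len < β.len by omega)]
            congr 1
            omega
      · exact hzrng
      · intro i
        rw [hc2'.2 i]
        by_cases h1 : i < ν.len
        · rw [if_pos h1, if_pos (show i < σ.len by omega)]
          exact hD.1 i h1
        · by_cases hb : i < σ.len
          · rw [if_pos hb, if_neg h1, hzedges, if_pos (show i - ν.len < β.len by omega),
              hβedges]
            congr 1
            omega
          · rw [if_neg hb, if_neg h1, hzedges, if_neg (show ¬ i - ν.len < β.len by omega)]
            congr 1
            omega
      · rw [hk', hμ'len]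
        omega
    · exact isConcat_mem_Zset hc2'

theorem ZZ_inter_src_cyl (μ ν σ : FinPath G) (hsrc : μ.src = ν.src) :
    ZZ μ ν ∩ {γ : GTrip G | γ.2.2 ∈ Zset σ} = (∅ : Set (GTrip G)) ∨
    ∃ μ' σ' : FinPath G, μ'.src = σ'.src ∧
      ZZ μ ν ∩ {γ : GTrip G | γ.2.2 ∈ Zset σ} = ZZ μ' σ' := by
  by_cases hlen : σ.len ≤ ν.len
  · by_cases hC : (∀ i < σ.len, ν.edges i = σ.edges i) ∧ σ.vtx = ν.vtx
    · right
      refine ⟨μ, ν, hsrc, ?_⟩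
      ext γ
      constructor
      · rintro ⟨h, _⟩; exact h
      · rintro ⟨z, h1, h2, hk⟩
        exact ⟨⟨z, h1, h2, hk⟩, Zset_mono hlen hC (isConcat_mem_Zset h2)⟩
    · left
      ext γ
      simp only [Set.mem_inter_iff, Set.mem_empty_iff_false, iff_false]
      rintro ⟨⟨z, h1, h2, hk⟩, hzσ⟩
      exact hC (Zset_inter_sub hlen hzσ (isConcat_mem_Zset h2))
  · by_cases hD : (∀ i < ν.len, σ.edges i = ν.edges i) ∧ ν.vtx = σ.vtx
    · right
      obtain ⟨μ', h1, h2⟩ := ZZ_inter_case_b μ ν σ hsrc (by omega) hD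
      exact ⟨μ', σ, h1, h2⟩
    · left
      ext γ
      simp only [Set.mem_inter_iff, Set.mem_empty_iff_false, iff_false]
      rintro ⟨⟨z, h1, h2, hk⟩, hzσ⟩
      exact hD (Zset_inter_sub (by omega) (isConcat_mem_Zset h2) hzσ)

end LPA
namespace LPA

variable {G : DirGraph} {R : Type} [CommRing R]

theorem rmul_mem {f : GTrip G → R} (hf : f ∈ Steinberg R G) {d : GTrip G → R}
    (hd : d ∈ Diag R G) : (fun γ => f γ * d (unit γ.2.2)) ∈ Steinberg R G := by
  induction hf using Submodule.span_induction generalizing d with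
  | mem f hfgen =>
    obtain ⟨μ, ν, hsrc, rfl⟩ := hfgen
    induction hd using Submodule.span_induction with
    | mem d hdgen =>
      obtain ⟨σ, rfl⟩ := hdgen
      have heq : (fun γ => Set.indicator (ZZ μ ν) (1 : GTrip G → R) γ *
          Set.indicator (unitSet (Zset σ)) (1 : GTrip G → R) (unit γ.2.2)) =
          Set.indicator (ZZ μ ν ∩ {γ : GTrip G | γ.2.2 ∈ Zset σ}) (1 : GTrip G → R) := by
        funext γ
        by_cases h1 : γ ∈ ZZ μ ν <;> by_cases h2 : γ.2.2 ∈ Zset σ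
        · rw [Set.indicator_of_mem h1, Set.indicator_of_mem (mem_unitSet_iff.2 h2),
            Set.indicator_of_mem (Set.mem_inter h1 h2)]
          simp
        · have hni : γ ∉ ZZ μ ν ∩ {γ : GTrip G | γ.2.2 ∈ Zset σ} := fun hc => h2 hc.2
          rw [Set.indicator_of_notMem (fun hc => h2 (mem_unitSet_iff.1 hc)),
            Set.indicator_of_notMem hni, mul_zero]
        · have hni : γ ∉ ZZ μ ν ∩ {γ : GTrip G | γ.2.2 ∈ Zset σ} := fun hc => h1 hc.1
          rw [Set.indicator_of_notMem h1, Set.indicator_of_notMem hni, zero_mul]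
        · have hni : γ ∉ ZZ μ ν ∩ {γ : GTrip G | γ.2.2 ∈ Zset σ} := fun hc => h1 hc.1
          rw [Set.indicator_of_notMem h1, Set.indicator_of_notMem hni, zero_mul]
      rw [heq]
      rcases ZZ_inter_src_cyl μ ν σ hsrc with h | ⟨μ', σ', hsrc', h⟩
      · rw [h, Set.indicator_empty]
        exact Submodule.zero_mem _
      · rw [h]
        exact Submodule.subset_span ⟨μ', σ', hsrc', rfl⟩
    | zero =>
      have : (fun γ => Set.indicator (ZZ μ ν) (1 : GTrip G → R) γ *
          (0 : GTrip G → R) (unit γ.2.2)) = 0 := by funext γ; simp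
      rw [this]; exact Submodule.zero_mem _
    | add d₁ d₂ _ _ h1 h2 =>
      have : (fun γ => Set.indicator (ZZ μ ν) (1 : GTrip G → R) γ * (d₁ + d₂) (unit γ.2.2)) =
          (fun γ => Set.indicator (ZZ μ ν) (1 : GTrip G → R) γ * d₁ (unit γ.2.2)) +
          (fun γ => Set.indicator (ZZ μ ν) (1 : GTrip G → R) γ * d₂ (unit γ.2.2)) := by
        funext γ; simp [mul_add]
      rw [this]; exact Submodule.add_mem _ h1 h2
    | smul c dd _ h =>
      have : (fun γ => Set.indicator (ZZ μ ν) (1 : GTrip G → R) γ * (c • dd) (unit γ.2.2)) =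
          c • (fun γ => Set.indicator (ZZ μ ν) (1 : GTrip G → R) γ * dd (unit γ.2.2)) := by
        funext γ
        show Set.indicator (ZZ μ ν) (1 : GTrip G → R) γ * (c * dd (unit γ.2.2)) =
          c * (Set.indicator (ZZ μ ν) (1 : GTrip G → R) γ * dd (unit γ.2.2))
        ring
      rw [this]; exact Submodule.smul_mem _ _ h
  | zero =>
    have : (fun γ => (0 : GTrip G → R) γ * d (unit γ.2.2)) = 0 := by funext γ; simp
    rw [this]; exact Submodule.zero_mem _
  | add f₁ f₂ _ _ h1 h2 =>
    have : (fun γ => (f₁ + f₂) γ * d (unit γ.2.2)) =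
        (fun γ => f₁ γ * d (unit γ.2.2)) + (fun γ => f₂ γ * d (unit γ.2.2)) := by
      funext γ; simp [add_mul]
    rw [this]; exact Submodule.add_mem _ (h1 hd) (h2 hd)
  | smul c ff _ h =>
    have : (fun γ => (c • ff) γ * d (unit γ.2.2)) =
        c • (fun γ => ff γ * d (unit γ.2.2)) := by
      funext γ
      show c * ff γ * d (unit γ.2.2) = c * (ff γ * d (unit γ.2.2))
      ring
    rw [this]; exact Submodule.smul_mem _ _ (h hd)

theorem conv_diag_mem {f : GTrip G → R} (hf : f ∈ Steinberg R G) {d : GTrip G → R}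
    (hd : d ∈ Diag R G) : conv f d ∈ Steinberg R G := by
  have : conv f d = fun γ => f γ * d (unit γ.2.2) := by
    funext γ
    exact conv_right_diag f d (diag_supp hd) γ
  rw [this]
  exact rmul_mem hf hd

end LPA
namespace LPA

variable {G : DirGraph} {R : Type} [CommRing R] [StarRing R]

theorem Phi_eval_unit (n d : GTrip G → R) (hd : IsDiagSupp d) (x : InfPath G) :
    conv (conv (starf n) d) n (unit x) =
      ∑ᶠ g ∈ {g : GTrip G | g.2.2 = x}, star (n g) * (d (unit g.1) * n g) := by
  rw [Phi_eval n d hd (unit x)]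
  refine finsum_mem_congr rfl ?_
  intro g hg
  have hgx : g.2.2 = x := hg
  have : ((g.1, g.2.1 + (unit x).2.1, (unit x).2.2) : GTrip G) = g := by
    show ((g.1, g.2.1 + 0, x) : GTrip G) = g
    rw [add_zero, ← hgx, gtrip_eta]
  rw [this]

theorem Psi_eval_unit (n d : GTrip G → R) (hd : IsDiagSupp d) (w : InfPath G) :
    conv (conv n d) (starf n) (unit w) =
      ∑ᶠ η ∈ {η : GTrip G | η.1 = w}, n η * (d (unit η.2.2) * star (n η)) := by
  rw [Psi_eval n d hd (unit w)]
  refine finsum_mem_congr rfl ?_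
  intro η hη
  have hηw : η.1 = w := hη
  have : (((unit w).2.2, η.2.1 - (unit w).2.1, η.2.2) : GTrip G) = η := by
    show ((w, η.2.1 - 0, η.2.2) : GTrip G) = η
    rw [sub_zero, ← hηw, gtrip_eta]
  rw [this]

end LPA


open LPA in
/-- For a diagonal-preserving ring `*`-isomorphism `π : L_R(E) → L_R(F)` with induced
homeomorphism `κ`, every normalizer `n` of `D(E)` satisfies:
(a) `x ∈ dom(n) ↔ κ(x) ∈ dom(π(n))`, and (b) `κ(α_n(x)) = α_{π(n)}(κ(x))` on `dom(n)`. -/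
theorem kappa_intertwines_alpha {E F : DirGraph}
    (hrfE : RowFinite E) (hnsE : NoSources E) (hrfF : RowFinite F) (hnsF : NoSources F)
    {R : Type} [CommRing R] [IsDomain R] [StarRing R]
    (π : (GTrip E → R) → (GTrip F → R))
    (hbij : Set.BijOn π (Steinberg R E : Set (GTrip E → R)) (Steinberg R F : Set (GTrip F → R)))
    (hadd : ∀ f ∈ Steinberg R E, ∀ g ∈ Steinberg R E, π (f + g) = π f + π g)
    (hmul : ∀ f ∈ Steinberg R E, ∀ g ∈ Steinberg R E, π (conv f g) = conv (π f) (π g))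
    (hstar : ∀ f ∈ Steinberg R E, π (starf f) = starf (π f))
    (hdiag : π '' (Diag R E : Set (GTrip E → R)) = (Diag R F : Set (GTrip F → R)))
    (κ : InfPath E ≃ₜ InfPath F)
    (hκ : ∀ d ∈ Diag R E, ∀ x : InfPath E, d (unit x) ≠ 0 ↔ π d (unit (κ x)) ≠ 0) :
    ∀ n : GTrip E → R, IsNormalizer n →
      (∀ x : InfPath E, x ∈ domSet n ↔ κ x ∈ domSet (π n)) ∧
      (∀ x ∈ domSet n, κ (alphaFun n x) = alphaFun (π n) (κ x)) := by
  intro n hn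
  obtain ⟨hnS, hnorm⟩ := hn
  have hπnS : π n ∈ Steinberg R F := hbij.mapsTo hnS
  have hstarnS : starf n ∈ Steinberg R E := starf_mem hnS
  have hπstar : π (starf n) = starf (π n) := hstar n hnS
  have hEtoF : ∀ d ∈ Diag R E, π d ∈ Diag R F := by
    intro d hd
    have h1 : π d ∈ π '' (Diag R E : Set (GTrip E → R)) := ⟨d, hd, rfl⟩
    rw [hdiag] at h1
    exact h1
  have hFtoE : ∀ d' ∈ Diag R F, ∃ d ∈ Diag R E, π d = d' := by
    intro d' hd'
    have h1 : d' ∈ π '' (Diag R E : Set (GTrip E → R)) := by rw [hdiag]; exact hd'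
    obtain ⟨d, hd, he⟩ := h1
    exact ⟨d, hd, he⟩
  have hPsiT : ∀ d ∈ Diag R E,
      π (conv (conv n d) (starf n)) = conv (conv (π n) (π d)) (starf (π n)) := by
    intro d hd
    have hdS : d ∈ Steinberg R E := diag_le_steinberg hd
    rw [hmul _ (conv_diag_mem hnS hd) _ hstarnS, hmul _ hnS _ hdS, hπstar]
  have hPhiT : ∀ d ∈ Diag R E,
      π (conv (conv (starf n) d) n) = conv (conv (starf (π n)) (π d)) (π n) := by
    intro d hd
    have hdS : d ∈ Steinberg R E := diag_le_steinberg hd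
    rw [hmul _ (conv_diag_mem hstarnS hd) _ hnS, hmul _ hstarnS _ hdS, hπstar]
  have hnormF : ∀ d' ∈ Diag R F,
      conv (conv (π n) d') (starf (π n)) ∈ Diag R F ∧
      conv (conv (starf (π n)) d') (π n) ∈ Diag R F := by
    intro d' hd'
    obtain ⟨d, hd, rfl⟩ := hFtoE d' hd'
    constructor
    · rw [← hPsiT d hd]
      have h2 : π (conv (conv n d) (starf n)) ∈ π '' (Diag R E : Set (GTrip E → R)) :=
        ⟨_, (hnorm d hd).1, rfl⟩
      rw [hdiag] at h2
      exact h2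
    · rw [← hPhiT d hd]
      have h2 : π (conv (conv (starf n) d) n) ∈ π '' (Diag R E : Set (GTrip E → R)) :=
        ⟨_, (hnorm d hd).2, rfl⟩
      rw [hdiag] at h2
      exact h2
  obtain ⟨hfibE2, hfibE1⟩ := fiber_finite hnS
  obtain ⟨hfibF2, hfibF1⟩ := fiber_finite hπnS
  have hUE : ∀ g g' : GTrip E, n g ≠ 0 → n g' ≠ 0 → g.2.2 = g'.2.2 → g = g' := by
    apply src_unique hfibE1
    intro d hd γ hγ
    by_contra h0
    exact hγ (diag_supp (hnorm d hd).1 γ h0)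
  have hUF : ∀ g g' : GTrip F, π n g ≠ 0 → π n g' ≠ 0 → g.2.2 = g'.2.2 → g = g' := by
    apply src_unique hfibF1
    intro d' hd' γ hγ
    by_contra h0
    exact hγ (diag_supp ((hnormF d' hd').1) γ h0)
  -- characterization of dom
  have domE_iff : ∀ x : InfPath E, x ∈ domSet n ↔ ∃ g : GTrip E, n g ≠ 0 ∧ g.2.2 = x := by
    intro x
    constructor
    · intro hx
      have hx' : conv (starf n) n (unit x) ≠ 0 := hx
      rw [nstarn_eval] at hx'
      obtain ⟨g, hg1, hg2⟩ := finsum_mem_ne_zero hx'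
      refine ⟨g, fun h0 => hg2 (by rw [h0, star_zero, zero_mul]), hg1⟩
    · rintro ⟨g, hg, hgx⟩
      show conv (starf n) n (unit x) ≠ 0
      rw [nstarn_eval, finsum_mem_eq_single' _ g _ hgx]
      · exact mul_ne_zero (by rwa [star_ne_zero]) hg
      · intro b hb hne
        by_cases hb0 : n b = 0
        · rw [hb0, star_zero, zero_mul]
        · exact absurd (hUE b g hb0 hg ((show b.2.2 = x from hb).trans hgx.symm)) hne
  have domF_iff : ∀ y : InfPath F, y ∈ domSet (π n) ↔ ∃ h : GTrip F, π n h ≠ 0 ∧ h.2.2 = y := by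
    intro y
    constructor
    · intro hy
      have hy' : conv (starf (π n)) (π n) (unit y) ≠ 0 := hy
      rw [nstarn_eval] at hy'
      obtain ⟨g, hg1, hg2⟩ := finsum_mem_ne_zero hy'
      refine ⟨g, fun h0 => hg2 (by rw [h0, star_zero, zero_mul]), hg1⟩
    · rintro ⟨h, hh, hhy⟩
      show conv (starf (π n)) (π n) (unit y) ≠ 0
      rw [nstarn_eval, finsum_mem_eq_single' _ h _ hhy]
      · exact mul_ne_zero (by rwa [star_ne_zero]) hh
      · intro b hb hne
        by_cases hb0 : π n b = 0
        · rw [hb0, star_zero, zero_mul]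
        · exact absurd (hUF b h hb0 hh ((show b.2.2 = y from hb).trans hhy.symm)) hne
  -- part (a)
  have parta : ∀ x : InfPath E, x ∈ domSet n ↔ κ x ∈ domSet (π n) := by
    intro x
    constructor
    · intro hx
      obtain ⟨g, hg, hgx⟩ := (domE_iff x).1 hx
      set d : GTrip E → R := Set.indicator (unitSet (Zset (iseg g.1 0))) 1 with hddef
      have hd : d ∈ Diag R E := Submodule.subset_span ⟨iseg g.1 0, rfl⟩
      have hd1 : d (unit g.1) = 1 := by
        rw [hddef, Set.indicator_of_mem (mem_unitSet_iff.2 (mem_iseg_self g.1 0))]; rfl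
      have hval : conv (conv (starf n) d) n (unit x) = star (n g) * (d (unit g.1) * n g) := by
        rw [Phi_eval_unit n d (diag_supp hd) x]
        refine finsum_mem_eq_single' _ g _ hgx ?_
        intro b hb hne
        by_cases hb0 : n b = 0
        · rw [hb0, star_zero, zero_mul]
        · exact absurd (hUE b g hb0 hg ((show b.2.2 = x from hb).trans hgx.symm)) hne
      have hne0 : conv (conv (starf n) d) n (unit x) ≠ 0 := by
        rw [hval, hd1, one_mul]
        exact mul_ne_zero (by rwa [star_ne_zero]) hg
      have hπne : π (conv (conv (starf n) d) n) (unit (κ x)) ≠ 0 :=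
        (hκ _ (hnorm d hd).2 x).1 hne0
      rw [hPhiT d hd] at hπne
      rw [Phi_eval_unit (π n) (π d) (diag_supp (hEtoF d hd)) (κ x)] at hπne
      obtain ⟨h, hh1, hh2⟩ := finsum_mem_ne_zero hπne
      refine (domF_iff (κ x)).2 ⟨h, fun h0 => hh2 (by rw [h0, star_zero, zero_mul]), hh1⟩
    · intro hy
      obtain ⟨h, hh, hhy⟩ := (domF_iff (κ x)).1 hy
      set z₀ : InfPath E := κ.symm h.1 with hz₀def
      set d : GTrip E → R := Set.indicator (unitSet (Zset (iseg z₀ 0))) 1 with hddef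
      have hd : d ∈ Diag R E := Submodule.subset_span ⟨iseg z₀ 0, rfl⟩
      have hd1 : d (unit z₀) ≠ 0 := by
        rw [hddef, Set.indicator_of_mem (mem_unitSet_iff.2 (mem_iseg_self z₀ 0))]
        exact one_ne_zero
      have hπd1 : π d (unit h.1) ≠ 0 := by
        have := (hκ d hd z₀).1 hd1
        rwa [hz₀def, Homeomorph.apply_symm_apply] at this
      have hvalF : conv (conv (starf (π n)) (π d)) (π n) (unit (κ x)) =
          star (π n h) * (π d (unit h.1) * π n h) := by
        rw [Phi_eval_unit (π n) (π d) (diag_supp (hEtoF d hd)) (κ x)]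
        refine finsum_mem_eq_single' _ h _ hhy ?_
        intro b hb hne
        by_cases hb0 : π n b = 0
        · rw [hb0, star_zero, zero_mul]
        · exact absurd (hUF b h hb0 hh ((show b.2.2 = κ x from hb).trans hhy.symm)) hne
      have hne0 : π (conv (conv (starf n) d) n) (unit (κ x)) ≠ 0 := by
        rw [hPhiT d hd, hvalF]
        exact mul_ne_zero (by rwa [star_ne_zero]) (mul_ne_zero hπd1 hh)
      have hEne : conv (conv (starf n) d) n (unit x) ≠ 0 :=
        (hκ _ (hnorm d hd).2 x).2 hne0
      rw [Phi_eval_unit n d (diag_supp hd) x] at hEne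
      obtain ⟨g, hg1, hg2⟩ := finsum_mem_ne_zero hEne
      exact (domE_iff x).2 ⟨g, fun h0 => hg2 (by rw [h0, star_zero, zero_mul]), hg1⟩
  refine ⟨parta, ?_⟩
  -- part (b)
  intro x hx
  obtain ⟨g, hg, hgx⟩ := (domE_iff x).1 hx
  have hκx : κ x ∈ domSet (π n) := (parta x).1 hx
  obtain ⟨h₀, hh₀, hh₀y⟩ := (domF_iff (κ x)).1 hκx
  have hαE : alphaFun n x = g.1 := by
    have hex : ∃ g0 : GTrip E, n g0 ≠ 0 ∧ g0.2.2 = x := ⟨g, hg, hgx⟩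
    rw [alphaFun, dif_pos hex]
    exact congrArg Prod.fst
      (hUE _ _ hex.choose_spec.1 hg (hex.choose_spec.2.trans hgx.symm))
  have hαF : alphaFun (π n) (κ x) = h₀.1 := by
    have hex : ∃ h : GTrip F, π n h ≠ 0 ∧ h.2.2 = κ x := ⟨h₀, hh₀, hh₀y⟩
    rw [alphaFun, dif_pos hex]
    exact congrArg Prod.fst
      (hUF _ _ hex.choose_spec.1 hh₀ (hex.choose_spec.2.trans hh₀y.symm))
  rw [hαE, hαF]
  -- main claim : κ g.1 = h₀.1
  set w := g.1 with hwdef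
  set B : Set (InfPath E) :=
    ((fun η : GTrip E => η.2.2) '' {η : GTrip E | n η ≠ 0 ∧ η.1 = w}) ∪
    ((fun h : GTrip F => κ.symm h.2.2) '' {h : GTrip F | π n h ≠ 0 ∧ h.1 = κ w}) with hBdef
  have hBfin : B.Finite := ((hfibE1 w).image _).union ((hfibF1 (κ w)).image _)
  obtain ⟨L, hL⟩ := exists_sep x B hBfin
  set d : GTrip E → R := Set.indicator (unitSet (Zset (iseg x L))) 1 with hddef
  have hd : d ∈ Diag R E := Submodule.subset_span ⟨iseg x L, rfl⟩
  have hdx : d (unit x) = 1 := by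
    rw [hddef, Set.indicator_of_mem (mem_unitSet_iff.2 (mem_iseg_self x L))]; rfl
  have hval : conv (conv n d) (starf n) (unit w) = n g * (d (unit g.2.2) * star (n g)) := by
    rw [Psi_eval_unit n d (diag_supp hd) w]
    refine finsum_mem_eq_single' _ g _ rfl ?_
    intro b hb hne
    by_cases hb0 : n b = 0
    · rw [hb0, zero_mul]
    · by_cases hbsrc : b.2.2 = x
      · exact absurd (hUE b g hb0 hg (hbsrc.trans hgx.symm)) hne
      · have hbB : b.2.2 ∈ B := Or.inl ⟨b, ⟨hb0, hb⟩, rfl⟩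
        have : d (unit b.2.2) = 0 := by
          rw [hddef, Set.indicator_of_notMem]
          intro hmem
          exact hL b.2.2 hbB hbsrc (mem_unitSet_iff.1 hmem)
        rw [this, zero_mul, mul_zero]
  have hne0 : conv (conv n d) (starf n) (unit w) ≠ 0 := by
    rw [hval, hgx, hdx, one_mul]
    exact mul_ne_zero hg (by rwa [star_ne_zero])
  have hπne : π (conv (conv n d) (starf n)) (unit (κ w)) ≠ 0 :=
    (hκ _ (hnorm d hd).1 w).1 hne0
  rw [hPsiT d hd] at hπne
  rw [Psi_eval_unit (π n) (π d) (diag_supp (hEtoF d hd)) (κ w)] at hπne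
  obtain ⟨h, hh1, hh2⟩ := finsum_mem_ne_zero hπne
  have hhn : π n h ≠ 0 := fun h0 => hh2 (by rw [h0, zero_mul])
  have hhd : π d (unit h.2.2) ≠ 0 := by
    intro h0
    exact hh2 (by rw [h0, zero_mul, mul_zero])
  have hh1' : h.1 = κ w := hh1
  -- h.2.2 = κ x
  have hsrc : h.2.2 = κ x := by
    set z : InfPath E := κ.symm h.2.2 with hzdef
    have hκz : κ z = h.2.2 := Homeomorph.apply_symm_apply κ h.2.2
    have hdz : d (unit z) ≠ 0 := (hκ d hd z).2 (by rw [hκz]; exact hhd)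
    have hzZ : z ∈ Zset (iseg x L) := by
      by_contra hc
      exact hdz (by rw [hddef, Set.indicator_of_notMem (fun hm => hc (mem_unitSet_iff.1 hm))])
    have hzB : z ∈ B := Or.inr ⟨h, ⟨hhn, hh1'⟩, rfl⟩
    have hzx : z = x := by
      by_contra hc
      exact hL z hzB hc hzZ
    rw [← hκz, hzx]
  have : h = h₀ := hUF h h₀ hhn hh₀ (hsrc.trans hh₀y.symm)
  rw [← this, hh1']
end
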